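/- Let S be a preordered abelian monoid, let y ∈ S with y ≠ 0 not be paradoxical, let x ∈ ⟨y⟩, and let S₀ ⊆ ⟨y⟩ be a finite subset containing x and y. Then there is a function ν : S₀ → [0,∞) with ν(y) = 1 such that: (a) for all m, n ∈ ℕ and all x₁,…,x_m, y₁,…,y_n ∈ S₀ with x₁ + ⋯ + x_m ≤ y₁ + ⋯ + y_n one has ν(x₁) + ⋯ + ν(x_m) ≤ ν(y₁) + ⋯ + ν(y_n); and (b) ν(x) = inf{(p − q)/k : p, q ∈ ℕ, k ∈ ℕ with k ≥ 1, and q·y + k·x ≤ p·y}. -/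

import Mathlib

set_option linter.unusedSectionVars false


open Finset

section Tarski

variable {S : Type*} [AddCommMonoid S] [Preorder S]

theorem tk_addLe (hadd : ∀ x y z : S, x ≤ y → x + z ≤ y + z)
    {a b c d : S} (h1 : a ≤ b) (h2 : c ≤ d) : a + c ≤ b + d := by
  calc a + c ≤ b + c := hadd _ _ _ h1
  _ = c + b := add_comm _ _
  _ ≤ d + b := hadd _ _ _ h2
  _ = b + d := add_comm _ _

theorem tk_leAdd (hzero : ∀ x : S, 0 ≤ x) (hadd : ∀ x y z : S, x ≤ y → x + z ≤ y + z)
    (a c : S) : a ≤ c + a := by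
  simpa using hadd 0 c a (hzero c)

theorem tk_smulLe (hadd : ∀ x y z : S, x ≤ y → x + z ≤ y + z)
    (n : ℕ) {a b : S} (h : a ≤ b) : n • a ≤ n • b := by
  induction n with
  | zero => simp
  | succ n ih =>
    rw [succ_nsmul, succ_nsmul]
    exact tk_addLe hadd ih h

theorem tk_sumLe (hadd : ∀ x y z : S, x ≤ y → x + z ≤ y + z)
    {ι : Type*} (t : Finset ι) (f g : ι → S) (h : ∀ i ∈ t, f i ≤ g i) :
    ∑ i ∈ t, f i ≤ ∑ i ∈ t, g i := by
  classical
  induction t using Finset.induction with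
  | empty => simp
  | insert _ _ hnot ih =>
    rename_i a s
    rw [Finset.sum_insert hnot, Finset.sum_insert hnot]
    exact tk_addLe hadd (h a (Finset.mem_insert_self a s))
      (ih fun i hi => h i (Finset.mem_insert_of_mem hi))

theorem tk_sumSmul {ι : Type*} (t : Finset ι) (c : ι → ℕ) (z : S) :
    ∑ i ∈ t, c i • z = (∑ i ∈ t, c i) • z := by
  classical
  induction t using Finset.induction with
  | empty => simp
  | insert _ _ hnot ih =>
    rename_i a s
    rw [Finset.sum_insert hnot, Finset.sum_insert hnot, ih, add_smul]

/-- coefficient monotonicity of `n • y`. -/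
theorem tk_ymul (hzero : ∀ x : S, 0 ≤ x) (hadd : ∀ x y z : S, x ≤ y → x + z ≤ y + z)
    (y : S) {A B : ℕ} (h : A ≤ B) : A • y ≤ B • y := by
  have : B • y = (B - A) • y + A • y := by
    rw [← add_smul]; congr 1; omega
  rw [this]
  exact tk_leAdd hzero hadd _ _

/-- no paradox: `A • y ≤ B • y → A ≤ B`. -/
theorem tk_yle (hzero : ∀ x : S, 0 ≤ x) (hadd : ∀ x y z : S, x ≤ y → x + z ≤ y + z)
    {y : S} (hnp : ¬ ∃ n : ℕ, 1 ≤ n ∧ (n + 1) • y ≤ n • y)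
    {A B : ℕ} (h : A • y ≤ B • y) : A ≤ B := by
  by_contra hc
  push_neg at hc
  refine hnp ⟨A, by omega, ?_⟩
  calc (A + 1) • y ≤ (2 * A - B) • y := tk_ymul hzero hadd y (by omega)
  _ = (A - B) • y + A • y := by rw [← add_smul]; congr 1; omega
  _ ≤ (A - B) • y + B • y := by
      have := hadd _ _ ((A - B) • y) h
      simpa [add_comm] using this
  _ = A • y := by rw [← add_smul]; congr 1; omega

/-- iteration lemma: `c + d ≤ e + d → t•c + d ≤ t•e + d`. -/
theorem tk_iter (hadd : ∀ x y z : S, x ≤ y → x + z ≤ y + z)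
    {c d e : S} (h : c + d ≤ e + d) (t : ℕ) : t • c + d ≤ t • e + d := by
  induction t with
  | zero => simp
  | succ n ih =>
    calc (n + 1) • c + d = c + (n • c + d) := by rw [succ_nsmul]; abel
    _ ≤ c + (n • e + d) := by
        have := hadd _ _ c ih; simpa [add_comm] using this
    _ = n • e + (c + d) := by abel
    _ ≤ n • e + (e + d) := by
        have := hadd _ _ (n • e) h; simpa [add_comm] using this
    _ = (n + 1) • e + d := by rw [succ_nsmul]; abel

end Tarski
open Finset
set_option linter.unusedSectionVars false

section TarskiB
variable {S : Type*} [AddCommMonoid S] [Preorder S]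

def Rset (y z : S) : Set ℝ :=
  {r : ℝ | ∃ p q k : ℕ, 1 ≤ k ∧ q • y + k • z ≤ p • y ∧ r = ((p : ℝ) - (q : ℝ)) / (k : ℝ)}

noncomputable def Ff (y z : S) : ℝ := sInf (Rset y z)

theorem Rset_nonneg (hzero : ∀ x : S, 0 ≤ x) (hadd : ∀ x y z : S, x ≤ y → x + z ≤ y + z)
    {y : S} (hnp : ¬ ∃ n : ℕ, 1 ≤ n ∧ (n + 1) • y ≤ n • y)
    (z : S) {r : ℝ} (hr : r ∈ Rset y z) : 0 ≤ r := by
  obtain ⟨p, q, k, hk, hle, rfl⟩ := hr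
  have h1 : q • y ≤ p • y := le_trans (tk_leAdd hzero hadd _ (k • z)) (by rwa [add_comm] at hle)
  have := tk_yle hzero hadd hnp h1
  have hk' : (0:ℝ) < k := by exact_mod_cast hk
  apply div_nonneg _ hk'.le
  have : (q:ℝ) ≤ p := by exact_mod_cast this
  linarith

theorem Rset_bdd (hzero : ∀ x : S, 0 ≤ x) (hadd : ∀ x y z : S, x ≤ y → x + z ≤ y + z)
    {y : S} (hnp : ¬ ∃ n : ℕ, 1 ≤ n ∧ (n + 1) • y ≤ n • y) (z : S) :
    BddBelow (Rset y z) :=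
  ⟨0, fun _ hr => Rset_nonneg hzero hadd hnp z hr⟩

theorem Rset_mem (y z : S) {n : ℕ} (h : z ≤ n • y) : ((n : ℝ) ∈ Rset y z) := by
  refine ⟨n, 0, 1, le_refl 1, ?_, by norm_num⟩
  simpa using h

theorem Ff_nonneg (hzero : ∀ x : S, 0 ≤ x) (hadd : ∀ x y z : S, x ≤ y → x + z ≤ y + z)
    {y : S} (hnp : ¬ ∃ n : ℕ, 1 ≤ n ∧ (n + 1) • y ≤ n • y) (z : S) : 0 ≤ Ff y z :=
  Real.sInf_nonneg fun _ hr => Rset_nonneg hzero hadd hnp z hr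

theorem Ff_y (hzero : ∀ x : S, 0 ≤ x) (hadd : ∀ x y z : S, x ≤ y → x + z ≤ y + z)
    {y : S} (hnp : ¬ ∃ n : ℕ, 1 ≤ n ∧ (n + 1) • y ≤ n • y) : Ff y y = 1 := by
  apply le_antisymm
  · have : (1:ℝ) ∈ Rset y y := by simpa using Rset_mem y y (by simp : y ≤ 1 • y)
    exact csInf_le (Rset_bdd hzero hadd hnp y) this
  · apply le_csInf ⟨1, by simpa using Rset_mem y y (by simp : y ≤ 1 • y)⟩
    rintro r ⟨p, q, k, hk, hle, rfl⟩
    have h1 : (q + k) • y ≤ p • y := by rwa [add_smul]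
    have h2 : q + k ≤ p := tk_yle hzero hadd hnp h1
    rw [le_div_iff₀ (by exact_mod_cast hk : (0:ℝ) < k)]
    have : (q:ℝ) + k ≤ p := by exact_mod_cast h2
    linarith

/-- `Ff` is subadditive. -/
theorem Ff_add (hzero : ∀ x : S, 0 ≤ x) (hadd : ∀ x y z : S, x ≤ y → x + z ≤ y + z)
    {y : S} (hnp : ¬ ∃ n : ℕ, 1 ≤ n ∧ (n + 1) • y ≤ n • y)
    {z w : S} (hz : ∃ n : ℕ, z ≤ n • y) (hw : ∃ n : ℕ, w ≤ n • y) :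
    Ff y (z + w) ≤ Ff y z + Ff y w := by
  obtain ⟨nz, hnz⟩ := hz
  obtain ⟨nw, hnw⟩ := hw
  have hzne : (Rset y z).Nonempty := ⟨_, Rset_mem y z hnz⟩
  have hwne : (Rset y w).Nonempty := ⟨_, Rset_mem y w hnw⟩
  have key : ∀ r1 ∈ Rset y z, ∀ r2 ∈ Rset y w, Ff y (z + w) ≤ r1 + r2 := by
    rintro r1 ⟨p, q, k, hk, hle, rfl⟩ r2 ⟨p', q', k', hk', hle', rfl⟩
    apply csInf_le (Rset_bdd hzero hadd hnp _)
    refine ⟨k' * p + k * p', k' * q + k * q', k * k', Nat.one_le_iff_ne_zero.2 (by positivity), ?_, ?_⟩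
    · have h1 : k' • (q • y + k • z) ≤ k' • (p • y) := tk_smulLe hadd _ hle
      have h2 : k • (q' • y + k' • w) ≤ k • (p' • y) := tk_smulLe hadd _ hle'
      have h3 := tk_addLe hadd h1 h2
      calc (k' * q + k * q') • y + (k * k') • (z + w)
          = k' • (q • y + k • z) + k • (q' • y + k' • w) := by
            simp only [smul_add, mul_smul, add_smul]
            rw [smul_comm k k' z]
            abel
        _ ≤ k' • (p • y) + k • (p' • y) := h3
        _ = (k' * p + k * p') • y := by simp [mul_smul, add_smul]
    · have hkr : (0:ℝ) < k := by exact_mod_cast hk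
      have hkr' : (0:ℝ) < k' := by exact_mod_cast hk'
      push_cast
      field_simp
      ring
  have key2 : ∀ r1 ∈ Rset y z, Ff y (z + w) - r1 ≤ Ff y w := by
    intro r1 h1
    apply le_csInf hwne
    intro r2 h2
    linarith [key r1 h1 r2 h2]
  have key3 : Ff y (z + w) - Ff y w ≤ Ff y z := by
    apply le_csInf hzne
    intro r1 h1
    linarith [key2 r1 h1]
  linarith

theorem Ff_zero (hzero : ∀ x : S, 0 ≤ x) (hadd : ∀ x y z : S, x ≤ y → x + z ≤ y + z)
    {y : S} (hnp : ¬ ∃ n : ℕ, 1 ≤ n ∧ (n + 1) • y ≤ n • y) : Ff y (0 : S) = 0 := by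
  apply le_antisymm
  · have : (0:ℝ) ∈ Rset y (0:S) := by simpa using Rset_mem y (0:S) (by simp : (0:S) ≤ 0 • y)
    exact csInf_le (Rset_bdd hzero hadd hnp _) this
  · exact Ff_nonneg hzero hadd hnp _

theorem Ff_nsmul (hzero : ∀ x : S, 0 ≤ x) (hadd : ∀ x y z : S, x ≤ y → x + z ≤ y + z)
    {y : S} (hnp : ¬ ∃ n : ℕ, 1 ≤ n ∧ (n + 1) • y ≤ n • y)
    {z : S} (hz : ∃ n : ℕ, z ≤ n • y) (e : ℕ) : Ff y (e • z) ≤ (e : ℝ) * Ff y z := by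
  induction e with
  | zero => simp [Ff_zero hzero hadd hnp]
  | succ n ih =>
    have h1 : Ff y ((n+1) • z) ≤ Ff y (n • z) + Ff y z := by
      rw [succ_nsmul]
      apply Ff_add hzero hadd hnp _ hz
      obtain ⟨m, hm⟩ := hz
      refine ⟨n * m, le_trans (tk_smulLe hadd n hm) ?_⟩
      rw [smul_smul]
    push_cast
    linarith

end TarskiB
section TarskiC
variable {S : Type*} [AddCommMonoid S] [Preorder S]

def sig (S₀ : Finset S) (a : ↥S₀ → ℕ) : S := ∑ i : ↥S₀, a i • (i : S)

noncomputable def toR {S : Type*} (S₀ : Finset S) (a : ↥S₀ → ℕ) : ↥S₀ → ℝ := fun i => (a i : ℝ)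

open Classical in
noncomputable def dind {S : Type*} (S₀ : Finset S) (j i : ↥S₀) : ℕ := if i = j then 1 else 0

theorem dind_cases {S₀ : Finset S} (j i : ↥S₀) : dind S₀ j i = 0 ∨ dind S₀ j i = 1 := by
  unfold dind; split <;> simp

theorem sig_add2 (S₀ : Finset S) (f g : ↥S₀ → ℕ) :
    sig S₀ (fun i => f i + g i) = sig S₀ f + sig S₀ g := by
  simp [sig, add_smul, Finset.sum_add_distrib]

theorem sig_indic (S₀ : Finset S) (c : ℕ) (j : ↥S₀) :
    sig S₀ (fun i => c * dind S₀ j i) = c • (j : S) := by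
  unfold sig
  rw [Fintype.sum_eq_single j]
  · simp [dind]
  · intro i hi
    simp [dind, hi]

theorem sig_mono (hzero : ∀ x : S, 0 ≤ x) (hadd : ∀ x y z : S, x ≤ y → x + z ≤ y + z)
    (S₀ : Finset S) {f g : ↥S₀ → ℕ} (h : ∀ i, f i ≤ g i) : sig S₀ f ≤ sig S₀ g :=
  tk_sumLe hadd _ _ _ fun i _ => tk_ymul hzero hadd (i : S) (h i)

theorem sig_bound (hzero : ∀ x : S, 0 ≤ x) (hadd : ∀ x y z : S, x ≤ y → x + z ≤ y + z)
    {y : S} (S₀ : Finset S) (N : ↥S₀ → ℕ) (hN : ∀ i : ↥S₀, (i : S) ≤ N i • y) (a : ↥S₀ → ℕ) :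
    sig S₀ a ≤ (∑ i : ↥S₀, a i * N i) • y := by
  calc sig S₀ a ≤ ∑ i : ↥S₀, (a i * N i) • y := by
        apply tk_sumLe hadd
        intro i _
        rw [mul_smul]
        exact tk_smulLe hadd _ (hN i)
  _ = (∑ i : ↥S₀, a i * N i) • y := tk_sumSmul _ _ _

theorem tk_limit {a b c : ℝ} (h : ∀ t : ℕ, 1 ≤ t → a ≤ b + c / t) : a ≤ b := by
  by_contra hab
  push_neg at hab
  obtain ⟨t, ht⟩ := exists_nat_gt (max (c / (a - b)) 0)
  have htpos : (0:ℝ) < t := lt_of_le_of_lt (le_max_right _ _) ht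
  have ht1 : 1 ≤ t := by exact_mod_cast Nat.one_le_iff_ne_zero.2 (by rintro rfl; simp at htpos)
  have h2 := h t ht1
  have h3 : c / (a - b) < t := lt_of_le_of_lt (le_max_left _ _) ht
  have h4 : c < (a - b) * t := by
    rw [div_lt_iff₀ (by linarith)] at h3; linarith
  have h5 : (a - b) * t ≤ c := by
    rw [← le_div_iff₀ htpos]; linarith
  linarith

/-- The core combinatorial lemma. -/
theorem tk_core (hzero : ∀ x : S, 0 ≤ x) (hadd : ∀ x y z : S, x ≤ y → x + z ≤ y + z)
    {y : S} (hnp : ¬ ∃ n : ℕ, 1 ≤ n ∧ (n + 1) • y ≤ n • y)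
    (S₀ : Finset S) (N : ↥S₀ → ℕ) (hN : ∀ i : ↥S₀, (i : S) ≤ N i • y)
    (jx jy : ↥S₀) (hjy : (jy : S) = y)
    (u w : ℤ) (a a' b : ↥S₀ → ℕ)
    (h1 : sig S₀ a' ≤ sig S₀ b)
    (h2 : ∀ i, u * dind S₀ jx i + w * dind S₀ jy i + (b i : ℤ) ≤ a i + a' i) :
    (u : ℝ) * Ff y (jx : S) + (w : ℝ) ≤ Ff y (sig S₀ a) := by
  set U : ℕ := u.toNat with hU
  set U' : ℕ := (-u).toNat with hU'
  set W : ℕ := w.toNat with hW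
  set W' : ℕ := (-w).toNat with hW'
  have hUr : (U : ℤ) - (U' : ℤ) = u := by omega
  have hWr : (W : ℤ) - (W' : ℤ) = w := by omega
  -- pointwise natural inequality
  have h2' : ∀ i, U * dind S₀ jx i + (W * dind S₀ jy i + b i)
      ≤ a i + (a' i + (U' * dind S₀ jx i + W' * dind S₀ jy i)) := by
    intro i
    have h := h2 i
    rcases dind_cases (S₀ := S₀) jx i with e1 | e1 <;> rcases dind_cases (S₀ := S₀) jy i with e2 | e2 <;>
      rw [e1, e2] at h ⊢ <;>
      simp only [Nat.cast_zero, Nat.cast_one, mul_zero, mul_one, zero_add, add_zero] at h ⊢ <;>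
      omega
  have star : U • (jx : S) + (W • y + sig S₀ b)
      ≤ sig S₀ a + (sig S₀ a' + (U' • (jx : S) + W' • y)) := by
    have h := sig_mono hzero hadd S₀ h2'
    simp only [sig_add2, sig_indic, hjy] at h
    exact h
  -- C + D ≤ E + D
  have hCD : (U • (jx : S) + W • y) + sig S₀ a'
      ≤ (sig S₀ a + (U' • (jx : S) + W' • y)) + sig S₀ a' := by
    calc (U • (jx : S) + W • y) + sig S₀ a'
        ≤ (U • (jx : S) + W • y) + sig S₀ b := tk_addLe hadd (le_refl _) h1
      _ = U • (jx : S) + (W • y + sig S₀ b) := by abel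
      _ ≤ sig S₀ a + (sig S₀ a' + (U' • (jx : S) + W' • y)) := star
      _ = (sig S₀ a + (U' • (jx : S) + W' • y)) + sig S₀ a' := by abel
  set N' : ℕ := ∑ i : ↥S₀, a' i * N i with hN'
  have hD : sig S₀ a' ≤ N' • y := sig_bound hzero hadd S₀ N hN a'
  have st : ∀ t : ℕ, (t * U) • (jx : S) + (t * W) • y
      ≤ t • sig S₀ a + ((t * U') • (jx : S) + ((t * W') • y + N' • y)) := by
    intro t
    have : t • (U • (jx : S) + W • y)
        ≤ t • (sig S₀ a + (U' • (jx : S) + W' • y)) + N' • y := by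
      calc t • (U • (jx : S) + W • y)
          ≤ sig S₀ a' + t • (U • (jx : S) + W • y) := tk_leAdd hzero hadd _ _
        _ = t • (U • (jx : S) + W • y) + sig S₀ a' := by abel
        _ ≤ t • (sig S₀ a + (U' • (jx : S) + W' • y)) + sig S₀ a' := tk_iter hadd hCD t
        _ ≤ t • (sig S₀ a + (U' • (jx : S) + W' • y)) + N' • y := tk_addLe hadd (le_refl _) hD
    calc (t * U) • (jx : S) + (t * W) • y = t • (U • (jx : S) + W • y) := by
          rw [smul_add, smul_smul, smul_smul]
      _ ≤ t • (sig S₀ a + (U' • (jx : S) + W' • y)) + N' • y := this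
      _ = t • sig S₀ a + ((t * U') • (jx : S) + ((t * W') • y + N' • y)) := by
          rw [smul_add, smul_add, smul_smul, smul_smul]; abel
  have hane : (Rset y (sig S₀ a)).Nonempty :=
    ⟨_, Rset_mem y _ (sig_bound hzero hadd S₀ N hN a)⟩
  have hxne : (Rset y (jx : S)).Nonempty := ⟨_, Rset_mem y _ (hN jx)⟩
  -- it suffices to bound every element of `Rset y (sig S₀ a)` from below
  apply le_csInf hane
  rintro r ⟨p, q, m, hm, hle, rfl⟩
  rcases lt_or_ge 0 u with hu | hu
  -- case u > 0 : U ≥ 1, U' = 0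
  · have hU1 : 1 ≤ U := by omega
    have hU'0 : U' = 0 := by omega
    apply tk_limit (c := (N' : ℝ))
    intro t ht
    -- S-inequality producing a representation of (jx : S)
    have hmem : ((m*t*W + t*q) • y) + ((m*t*U) • (jx : S)) ≤ (t*p + m*t*W' + m*N') • y := by
      have s1 := tk_smulLe hadd m (st t)
      rw [hU'0] at s1
      simp only [mul_zero, zero_smul, zero_add, add_zero] at s1
      have s2 := tk_addLe hadd (le_refl ((t*q) • y)) s1
      have s3 : (t*q) • y + m • (t • sig S₀ a) = t • (q • y + m • sig S₀ a) := by
        rw [smul_add, smul_smul, smul_smul, smul_smul, mul_comm m t, mul_comm t q]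
      have s4 : t • (q • y + m • sig S₀ a) ≤ t • (p • y) := tk_smulLe hadd t hle
      calc ((m*t*W + t*q) • y) + ((m*t*U) • (jx : S))
          = (t*q) • y + (m • ((t * U) • (jx : S) + (t * W) • y)) := by
            rw [smul_add, smul_smul, smul_smul, add_smul]
            ring_nf
            abel
        _ ≤ (t*q) • y + (m • (t • sig S₀ a) + ((m*(t * W')) • y + (m*N') • y)) := by
            have := tk_addLe hadd (le_refl ((t*q) • y)) s1
            simpa [smul_add, smul_smul] using this
        _ = (t • (q • y + m • sig S₀ a)) + ((m*(t * W')) • y + (m*N') • y) := by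
            rw [← s3]; abel
        _ ≤ (t • (p • y)) + ((m*(t * W')) • y + (m*N') • y) := tk_addLe hadd s4 (le_refl _)
        _ = (t*p + m*t*W' + m*N') • y := by
            rw [smul_smul, add_smul, add_smul]
            ring_nf
            abel
    have hmem' : ((((t*p + m*t*W' + m*N' : ℕ) : ℝ)) - ((m*t*W + t*q : ℕ) : ℝ)) / ((m*t*U : ℕ) : ℝ)
        ∈ Rset y (jx : S) :=
      ⟨t*p + m*t*W' + m*N', m*t*W + t*q, m*t*U,
        Nat.one_le_iff_ne_zero.2 (by positivity), hmem, rfl⟩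
    have hf : Ff y ((jx : S)) ≤ ((((t*p + m*t*W' + m*N' : ℕ) : ℝ)) - ((m*t*W + t*q : ℕ) : ℝ)) / ((m*t*U : ℕ) : ℝ) :=
      csInf_le (Rset_bdd hzero hadd hnp _) hmem'
    -- now pure real arithmetic
    have hmr : (0:ℝ) < (m:ℝ) := by exact_mod_cast hm
    have htr : (0:ℝ) < (t:ℝ) := by exact_mod_cast ht
    have hUrr : (0:ℝ) < (U:ℝ) := by exact_mod_cast hU1
    have hmtU : (0:ℝ) < ((m*t*U : ℕ) : ℝ) := by
      have : 0 < m*t*U := by positivity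
      exact_mod_cast this
    rw [le_div_iff₀ hmtU] at hf
    push_cast at hf
    have hUu : ((U:ℝ)) = (u:ℝ) := by
      have : (U : ℤ) = u := by omega
      exact_mod_cast this
    have hWw : ((W:ℝ)) = (w:ℝ) + ((W':ℝ)) := by
      have : (W : ℤ) = w + W' := by omega
      exact_mod_cast this
    rw [hUu, hWw] at hf
    have e : ((p:ℝ)-(q:ℝ))/(m:ℝ) + (N':ℝ)/(t:ℝ) = (((p:ℝ)-q)*t + (N':ℝ)*m)/((m:ℝ)*t) := by
      field_simp
      try ring
    rw [e, le_div_iff₀ (by positivity)]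
    ring_nf at hf ⊢
    linarith
  -- case u ≤ 0 : U = 0, U' = -u
  · have hU0 : U = 0 := by omega
    have key2 : ∀ r2 ∈ Rset y (jx : S),
        (w : ℝ) ≤ ((p:ℝ) - q)/m + (U' : ℝ) * r2 := by
      rintro r2 ⟨p2, q2, m2, hm2, hle2, rfl⟩
      apply tk_limit (c := (N' : ℝ))
      intro t ht
      -- natural number inequality from comparing multiples of y
      have hyineq : (m*m2*t*W + (t*m2*q + t*U'*m*q2)) • y
          ≤ (t*m2*p + t*U'*m*p2 + (m*m2*t*W' + m*m2*N')) • y := by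
        have s1 := tk_smulLe hadd (m*m2) (st t)
        rw [hU0] at s1
        simp only [mul_zero, zero_smul, zero_add, add_zero] at s1
        -- s1 : (m*m2) • ((t*W) • y) ≤ (m*m2) • (t • sig a + ((t*U') • jx + ((t*W') • y + N' • y)))
        have s4 : (t*m2) • (q • y + m • sig S₀ a) ≤ (t*m2) • (p • y) := tk_smulLe hadd _ hle
        have s5 : (t*U'*m) • (q2 • y + m2 • (jx : S)) ≤ (t*U'*m) • (p2 • y) :=
          tk_smulLe hadd _ hle2
        calc (m*m2*t*W + (t*m2*q + t*U'*m*q2)) • y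
            = (m*m2) • ((t*W) • y) + ((t*m2) • (q • y) + (t*U'*m) • (q2 • y)) := by
              simp only [smul_smul, add_smul]
              try ring_nf
              try abel
          _ ≤ ((m*m2) • (t • sig S₀ a + ((t * U') • (jx : S) + ((t * W') • y + N' • y))))
              + ((t*m2) • (q • y) + (t*U'*m) • (q2 • y)) := tk_addLe hadd s1 (le_refl _)
          _ = ((t*m2) • (q • y + m • sig S₀ a) + (t*U'*m) • (q2 • y + m2 • (jx : S)))
              + ((m*m2*t*W' + m*m2*N') • y) := by
              simp only [smul_add, smul_smul, add_smul]
              ring_nf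
              abel
          _ ≤ ((t*m2) • (p • y) + (t*U'*m) • (p2 • y)) + ((m*m2*t*W' + m*m2*N') • y) :=
              tk_addLe hadd (tk_addLe hadd s4 s5) (le_refl _)
          _ = (t*m2*p + t*U'*m*p2 + (m*m2*t*W' + m*m2*N')) • y := by
              simp only [smul_smul, add_smul]
              try ring_nf
              try abel
      have hnat : m*m2*t*W + (t*m2*q + t*U'*m*q2) ≤ t*m2*p + t*U'*m*p2 + (m*m2*t*W' + m*m2*N') :=
        tk_yle hzero hadd hnp hyineq
      -- real arithmetic
      have hmr : (0:ℝ) < (m:ℝ) := by exact_mod_cast hm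
      have hm2r : (0:ℝ) < (m2:ℝ) := by exact_mod_cast hm2
      have htr : (0:ℝ) < (t:ℝ) := by exact_mod_cast ht
      have hWw : ((W:ℝ)) - ((W':ℝ)) = (w:ℝ) := by exact_mod_cast hWr
      have hnr : ((m*m2*t*W + (t*m2*q + t*U'*m*q2) : ℕ) : ℝ)
          ≤ ((t*m2*p + t*U'*m*p2 + (m*m2*t*W' + m*m2*N') : ℕ) : ℝ) := by exact_mod_cast hnat
      push_cast at hnr
      have hWw2 : ((W:ℝ)) = (w:ℝ) + ((W':ℝ)) := by
        have : (W : ℤ) = w + W' := by omega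
        exact_mod_cast this
      rw [hWw2] at hnr
      have e : ((p:ℝ)-q)/m + (U':ℝ) * (((p2:ℝ)-q2)/m2) + (N':ℝ)/t
          = (((p:ℝ)-q)*(m2*t) + (U':ℝ)*((p2:ℝ)-q2)*(m*t) + (N':ℝ)*(m*m2)) / ((m:ℝ)*m2*t) := by
        field_simp
      rw [e, le_div_iff₀ (by positivity)]
      ring_nf at hnr ⊢
      linarith
    -- conclude : w - r ≤ U' * f
    have hf0 : 0 ≤ Ff y ((jx : S)) := Ff_nonneg hzero hadd hnp _
    have hUu : ((U':ℝ)) = -(u:ℝ) := by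
      have : (U' : ℤ) = -u := by omega
      exact_mod_cast this
    rcases Nat.eq_zero_or_pos U' with hU'0 | hU'pos
    · obtain ⟨r2, hr2⟩ := hxne
      have h := key2 r2 hr2
      rw [hU'0] at h
      simp only [Nat.cast_zero, zero_mul, add_zero] at h
      have hu0 : (u:ℝ) = 0 := by
        have : u = 0 := by omega
        exact_mod_cast this
      rw [hu0, zero_mul, zero_add]
      exact h
    · have hU'r : (0:ℝ) < (U':ℝ) := by exact_mod_cast hU'pos
      have hkey3 : ((w:ℝ) - ((p:ℝ) - q)/m) / (U':ℝ) ≤ Ff y ((jx : S)) := by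
        apply le_csInf hxne
        intro r2 hr2
        rw [div_le_iff₀ hU'r]
        have h := key2 r2 hr2
        linarith
      rw [div_le_iff₀ hU'r] at hkey3
      have hUu : ((U':ℝ)) = -(u:ℝ) := by
        have : (U' : ℤ) = -u := by omega
        exact_mod_cast this
      rw [hUu] at hkey3
      ring_nf at hkey3 ⊢
      linarith

end TarskiC
section TarskiD
variable {S : Type*} [AddCommMonoid S] [Preorder S]

def tkcone (S₀ : Finset S) : Set (↥S₀ → ℝ) :=
  {v | ∃ (n : ℕ) (c : Fin n → ℝ) (A B : Fin n → (↥S₀ → ℕ)),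
      (∀ j, 0 ≤ c j) ∧ (∀ j, sig S₀ (A j) ≤ sig S₀ (B j)) ∧
      v = ∑ j, c j • (toR S₀ (B j) - toR S₀ (A j))}

theorem tkcone_zero (S₀ : Finset S) : (0 : ↥S₀ → ℝ) ∈ tkcone S₀ :=
  ⟨0, ![], ![], ![], by simp, by simp, by simp⟩

theorem tkcone_add {S₀ : Finset S} {u v : ↥S₀ → ℝ} (hu : u ∈ tkcone S₀) (hv : v ∈ tkcone S₀) :
    u + v ∈ tkcone S₀ := by
  obtain ⟨n1, c1, A1, B1, hc1, hAB1, rfl⟩ := hu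
  obtain ⟨n2, c2, A2, B2, hc2, hAB2, rfl⟩ := hv
  refine ⟨n1 + n2, Fin.append c1 c2, Fin.append A1 A2, Fin.append B1 B2, ?_, ?_, ?_⟩
  · intro j
    refine Fin.addCases ?_ ?_ j <;> intro i <;>
      simp only [Fin.append_left, Fin.append_right]
    exacts [hc1 i, hc2 i]
  · intro j
    refine Fin.addCases ?_ ?_ j <;> intro i <;>
      simp only [Fin.append_left, Fin.append_right]
    exacts [hAB1 i, hAB2 i]
  · rw [Fin.sum_univ_add]
    simp only [Fin.append_left, Fin.append_right]

theorem tkcone_smul {S₀ : Finset S} {v : ↥S₀ → ℝ} (c : ℝ) (hc : 0 ≤ c) (hv : v ∈ tkcone S₀) :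
    c • v ∈ tkcone S₀ := by
  obtain ⟨n, c1, A, B, hc1, hAB, rfl⟩ := hv
  refine ⟨n, fun j => c * c1 j, A, B, fun j => mul_nonneg hc (hc1 j), hAB, ?_⟩
  rw [Finset.smul_sum]
  simp [smul_smul]

theorem tkcone_gen {S₀ : Finset S} {a b : ↥S₀ → ℕ} (h : sig S₀ a ≤ sig S₀ b) :
    (toR S₀ b - toR S₀ a) ∈ tkcone S₀ :=
  ⟨1, ![1], ![a], ![b], by simp, by simp [h], by simp⟩

theorem tkcone_sum {S₀ : Finset S} {ι : Type*} (t : Finset ι) (f : ι → (↥S₀ → ℝ))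
    (h : ∀ i ∈ t, f i ∈ tkcone S₀) : (∑ i ∈ t, f i) ∈ tkcone S₀ := by
  classical
  induction t using Finset.induction with
  | empty => simpa using tkcone_zero S₀
  | insert _ _ hnot ih =>
    rename_i a s
    rw [Finset.sum_insert hnot]
    exact tkcone_add (h a (Finset.mem_insert_self a s))
      (ih fun i hi => h i (Finset.mem_insert_of_mem hi))

theorem sig_mul (S₀ : Finset S) (c : ℕ) (a : ↥S₀ → ℕ) :
    sig S₀ (fun i => c * a i) = c • sig S₀ a := by
  simp [sig, mul_smul, Finset.smul_sum]

theorem sig_sum (S₀ : Finset S) {ι : Type*} (t : Finset ι) (g : ι → (↥S₀ → ℕ)) :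
    sig S₀ (fun i => ∑ j ∈ t, g j i) = ∑ j ∈ t, sig S₀ (g j) := by
  unfold sig
  rw [Finset.sum_comm]
  congr 1
  ext i
  rw [← tk_sumSmul]

/-- The key lemma: nonnegativity of the linear functional on the span of `δx, δy`
    intersected with the cone. -/
theorem tk_key (hzero : ∀ x : S, 0 ≤ x) (hadd : ∀ x y z : S, x ≤ y → x + z ≤ y + z)
    {y : S} (hnp : ¬ ∃ n : ℕ, 1 ≤ n ∧ (n + 1) • y ≤ n • y)
    (S₀ : Finset S) (N : ↥S₀ → ℕ) (hN : ∀ i : ↥S₀, (i : S) ≤ N i • y)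
    (jx jy : ↥S₀) (hjy : (jy : S) = y) (α β : ℝ)
    (h : (α • toR S₀ (dind S₀ jx) + β • toR S₀ (dind S₀ jy)) ∈ tkcone S₀) :
    0 ≤ α * Ff y (jx : S) + β := by
  obtain ⟨n, c, A, B, hc, hAB, hv⟩ := h
  have hf0 : 0 ≤ Ff y ((jx : S)) := Ff_nonneg hzero hadd hnp _
  have hone : ∃ k : ℕ, sig S₀ (fun _ => 1) ≤ k • y :=
    ⟨_, sig_bound hzero hadd S₀ N hN _⟩
  have hF10 : 0 ≤ Ff y (sig S₀ (fun _ => (1:ℕ))) := Ff_nonneg hzero hadd hnp _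
  set F1 : ℝ := Ff y (sig S₀ (fun _ => (1:ℕ))) with hF1def
  set Bmax : ℕ := ∑ j : Fin n, ∑ i : ↥S₀, B j i with hBmaxdef
  have hBmax : ∀ i : ↥S₀, (∑ j : Fin n, B j i) ≤ Bmax := by
    intro i
    apply Finset.sum_le_sum
    intro j _
    exact Finset.single_le_sum (fun _ _ => Nat.zero_le _) (Finset.mem_univ i)
  have main : ∀ T : ℕ, 1 ≤ T →
      -(α * Ff y ((jx : S)) + β) ≤ 0 + ((Bmax : ℝ) * F1 + Ff y ((jx : S)) + 1) / T := by
    intro T hT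
    have hTr : (0:ℝ) < (T:ℝ) := by exact_mod_cast hT
    set m : Fin n → ℕ := fun j => ⌈(T:ℝ) * c j⌉₊ with hmdef
    have hm1 : ∀ j, (T:ℝ) * c j ≤ m j := fun j => Nat.le_ceil _
    have hm2 : ∀ j, (m j : ℝ) ≤ (T:ℝ) * c j + 1 := by
      intro j
      have := Nat.ceil_lt_add_one (mul_nonneg hTr.le (hc j))
      exact le_of_lt this
    set A' : ↥S₀ → ℕ := fun i => ∑ j : Fin n, m j * A j i with hA'def
    set B' : ↥S₀ → ℕ := fun i => ∑ j : Fin n, m j * B j i with hB'def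
    have h1 : sig S₀ A' ≤ sig S₀ B' := by
      rw [hA'def, hB'def, sig_sum, sig_sum]
      apply tk_sumLe hadd
      intro j _
      rw [sig_mul, sig_mul]
      exact tk_smulLe hadd _ (hAB j)
    set u : ℤ := ⌊-(T:ℝ) * α⌋ with hudef
    set w : ℤ := ⌊-(T:ℝ) * β⌋ with hwdef
    have h2 : ∀ i, u * dind S₀ jx i + w * dind S₀ jy i + (B' i : ℤ)
        ≤ ((fun _ => Bmax) i : ℕ) + A' i := by
      intro i
      have hco := congr_fun hv i
      simp only [Pi.add_apply, Pi.smul_apply, smul_eq_mul, Finset.sum_apply, Pi.sub_apply,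
        toR] at hco
      -- hco : α * dind jx i + β * dind jy i = ∑ j, c j * (B j i - A j i)
      have hreal : (u:ℝ) * dind S₀ jx i + (w:ℝ) * dind S₀ jy i + (B' i : ℝ)
          ≤ (Bmax : ℝ) + (A' i : ℝ) := by
        have hu1 : (u:ℝ) ≤ -(T:ℝ) * α := Int.floor_le _
        have hw1 : (w:ℝ) ≤ -(T:ℝ) * β := Int.floor_le _
        have hdx : (0:ℝ) ≤ (dind S₀ jx i : ℝ) := by positivity
        have hdy : (0:ℝ) ≤ (dind S₀ jy i : ℝ) := by positivity
        have step1 : (u:ℝ) * dind S₀ jx i + (w:ℝ) * dind S₀ jy i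
            ≤ -(T:ℝ) * (α * dind S₀ jx i + β * dind S₀ jy i) := by
          have := mul_le_mul_of_nonneg_right hu1 hdx
          have := mul_le_mul_of_nonneg_right hw1 hdy
          nlinarith
        have step2 : (B' i : ℝ) - (A' i : ℝ)
            = ∑ j : Fin n, (m j : ℝ) * ((B j i : ℝ) - (A j i : ℝ)) := by
          rw [hA'def, hB'def]
          push_cast
          rw [← Finset.sum_sub_distrib]
          congr 1
          ext j
          ring
        have step3 : (B' i : ℝ) - (A' i : ℝ) + -(T:ℝ) * (α * dind S₀ jx i + β * dind S₀ jy i)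
            ≤ Bmax := by
          rw [step2, hco, Finset.mul_sum, ← Finset.sum_add_distrib]
          have hterm : ∀ j ∈ (Finset.univ : Finset (Fin n)),
              (m j : ℝ) * ((B j i : ℝ) - (A j i : ℝ))
              + -(T:ℝ) * (c j * ((B j i : ℝ) - (A j i : ℝ))) ≤ (B j i : ℝ) := by
            intro j _
            have hAnn : (0:ℝ) ≤ (A j i : ℝ) := by positivity
            have hBnn : (0:ℝ) ≤ (B j i : ℝ) := by positivity
            have e1 : (0:ℝ) ≤ (m j : ℝ) - (T:ℝ) * c j := by linarith [hm1 j]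
            have e2 : (m j : ℝ) - (T:ℝ) * c j ≤ 1 := by linarith [hm2 j]
            nlinarith
          calc (∑ j : Fin n, ((m j : ℝ) * ((B j i : ℝ) - (A j i : ℝ))
                + -(T:ℝ) * (c j * ((B j i : ℝ) - (A j i : ℝ)))))
              ≤ ∑ j : Fin n, (B j i : ℝ) := Finset.sum_le_sum hterm
            _ ≤ (Bmax : ℝ) := by exact_mod_cast hBmax i
        linarith
      exact_mod_cast hreal
    have hcore := tk_core hzero hadd hnp S₀ N hN jx jy hjy u w (fun _ => Bmax) A' B' h1 h2
    -- bound the right side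
    have hsig : sig S₀ (fun _ => Bmax) = Bmax • sig S₀ (fun _ => (1:ℕ)) := by
      rw [← sig_mul]
      simp
    have hub : Ff y (sig S₀ (fun _ => Bmax)) ≤ (Bmax : ℝ) * F1 := by
      rw [hsig]
      exact Ff_nsmul hzero hadd hnp hone Bmax
    have hu2 : -(T:ℝ) * α - 1 ≤ (u:ℝ) := by
      have := Int.sub_one_lt_floor (-(T:ℝ) * α)
      push_cast at this ⊢
      linarith
    have hw2 : -(T:ℝ) * β - 1 ≤ (w:ℝ) := by
      have := Int.sub_one_lt_floor (-(T:ℝ) * β)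
      push_cast at this ⊢
      linarith
    have hstep : (-(T:ℝ) * α - 1) * Ff y ((jx : S)) ≤ (u:ℝ) * Ff y ((jx : S)) :=
      mul_le_mul_of_nonneg_right hu2 hf0
    rw [zero_add, le_div_iff₀ hTr]
    nlinarith [hcore, hub, hstep, hw2]
  have := tk_limit main
  linarith

end TarskiD
/-- The key finite-subset lemma towards Tarski's theorem: if `y ≠ 0` is not paradoxical,
`x ∈ ⟨y⟩` and `S₀ ⊆ ⟨y⟩` is a finite set containing `x` and `y`, then there is a
nonnegative real-valued function `ν` on `S₀` with `ν y = 1` which is subadditive along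
inequalities of finite sums, and such that
`ν x = inf {(p - q)/k : q • y + k • x ≤ p • y, k ≥ 1}`. -/
theorem sig_dind {S : Type*} [AddCommMonoid S] [Preorder S] (S₀ : Finset S) (j : ↥S₀) :
    sig S₀ (dind S₀ j) = (j : S) := by
  have h := sig_indic S₀ 1 j
  simp only [one_mul, one_smul] at h
  exact h

theorem stmt7 {S : Type*} [AddCommMonoid S] [Preorder S]
    (hzero : ∀ x : S, 0 ≤ x)
    (hadd : ∀ x y z : S, x ≤ y → x + z ≤ y + z)
    (y : S) (hy : y ≠ 0)
    (hnp : ¬ ∃ n : ℕ, 1 ≤ n ∧ (n + 1) • y ≤ n • y)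
    (x : S) (hx : ∃ n : ℕ, x ≤ n • y)
    (S₀ : Finset S)
    (hS₀ : ∀ s ∈ S₀, ∃ n : ℕ, s ≤ n • y)
    (hxS₀ : x ∈ S₀) (hyS₀ : y ∈ S₀) :
    ∃ ν : S → ℝ,
      (∀ s ∈ S₀, 0 ≤ ν s) ∧
      ν y = 1 ∧
      (∀ (m n : ℕ) (xs : Fin m → S) (ys : Fin n → S),
        (∀ i, xs i ∈ S₀) → (∀ j, ys j ∈ S₀) →
        (∑ i, xs i) ≤ (∑ j, ys j) →
        (∑ i, ν (xs i)) ≤ ∑ j, ν (ys j)) ∧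
      ν x = sInf {r : ℝ | ∃ p q k : ℕ, 1 ≤ k ∧
        q • y + k • x ≤ p • y ∧ r = ((p : ℝ) - (q : ℝ)) / (k : ℝ)} := by
  classical
  choose N hN using fun i : ↥S₀ => hS₀ (i : S) i.2
  set jx : ↥S₀ := ⟨x, hxS₀⟩ with hjxdef
  set jy : ↥S₀ := ⟨y, hyS₀⟩ with hjydef
  have hjy : ((jy : S)) = y := rfl
  set δx : ↥S₀ → ℝ := toR S₀ (dind S₀ jx) with hδxdef
  set δy : ↥S₀ → ℝ := toR S₀ (dind S₀ jy) with hδydef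
  set f0 : ℝ := Ff y x with hf0def
  have hf0x : f0 = Ff y ((jx : S)) := rfl
  -- the cone
  set K : PointedCone ℝ (↥S₀ → ℝ) :=
    { carrier := tkcone S₀
      add_mem' := fun hu hv => tkcone_add hu hv
      zero_mem' := tkcone_zero S₀
      smul_mem' := fun c v hv => tkcone_smul (c : ℝ) c.2 hv } with hKdef
  have hKmem : ∀ v, v ∈ K ↔ v ∈ tkcone S₀ := fun v => Iff.rfl
  -- the subspace and the linear functional on it
  set M : Submodule ℝ (↥S₀ → ℝ) := Submodule.span ℝ {δx, δy} with hMdef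
  set cc : ℝ := if jx = jy then 0 else 1 with hccdef
  set g₀ : (↥S₀ → ℝ) →ₗ[ℝ] ℝ :=
    f0 • (LinearMap.proj jx : (↥S₀ → ℝ) →ₗ[ℝ] ℝ) + cc • (LinearMap.proj jy) with hg₀def
  have hδxx : δx jx = 1 := by simp [hδxdef, toR, dind]
  have hδyy : δy jy = 1 := by simp [hδydef, toR, dind]
  have hδxy : δy jx = if jx = jy then 1 else 0 := by
    simp only [hδydef, toR, dind]
    split_ifs with h <;> simp [h]
  have hδyx : δx jy = if jy = jx then 1 else 0 := by
    simp only [hδxdef, toR, dind]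
    split_ifs with h <;> simp [h]
  have factA : ∀ α β : ℝ, g₀ (α • δx + β • δy) = α * f0 + β := by
    intro α β
    simp only [hg₀def, LinearMap.add_apply, LinearMap.smul_apply, LinearMap.proj_apply,
      Pi.add_apply, Pi.smul_apply, smul_eq_mul]
    by_cases hxy : jx = jy
    · have hxyS : x = y := congrArg Subtype.val hxy
      have hf01 : f0 = 1 := by rw [hf0def, hxyS]; exact Ff_y hzero hadd hnp
      rw [hδxx, hδyy, hδxy, hδyx, hccdef, if_pos hxy, if_pos hxy, if_pos hxy.symm, hf01]
      ring
    · rw [hδxx, hδyy, hδxy, hδyx, hccdef, if_neg hxy, if_neg hxy,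
        if_neg (fun h => hxy h.symm)]
      ring
  have hδxM : δx ∈ M := Submodule.subset_span (Set.mem_insert _ _)
  have hδyM : δy ∈ M := Submodule.subset_span (Set.mem_insert_of_mem _ rfl)
  -- nonnegativity on M ∩ K
  have nonneg : ∀ v : (g₀.toPMap M).domain, (v : ↥S₀ → ℝ) ∈ K → 0 ≤ g₀.toPMap M v := by
    rintro ⟨v, hvM⟩ hvK
    show 0 ≤ g₀ v
    have hvM' : v ∈ M := by rwa [LinearMap.toPMap_domain] at hvM
    obtain ⟨α, β, hαβ⟩ := Submodule.mem_span_pair.1 hvM'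
    rw [← hαβ, factA α β, hf0x]
    apply tk_key hzero hadd hnp S₀ N hN jx jy hjy α β
    show (α • δx + β • δy) ∈ tkcone S₀
    rw [hαβ]
    exact hvK
  -- density
  have dense : ∀ v : ↥S₀ → ℝ, ∃ m : (g₀.toPMap M).domain, (m : ↥S₀ → ℝ) + v ∈ K := by
    intro v
    set Kc : ℝ := ∑ i : ↥S₀, max (-(v i)) 0 * N i with hKcdef
    have hmM : Kc • δy ∈ (g₀.toPMap M).domain := by
      rw [LinearMap.toPMap_domain]
      exact Submodule.smul_mem _ _ hδyM
    refine ⟨⟨Kc • δy, hmM⟩, ?_⟩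
    show Kc • δy + v ∈ tkcone S₀
    have hform : Kc • δy + v = ∑ i : ↥S₀,
        (max (v i) 0 • (toR S₀ (dind S₀ i) - toR S₀ (fun _ => 0))
          + max (-(v i)) 0 • (toR S₀ (fun j => N i * dind S₀ jy j) - toR S₀ (dind S₀ i))) := by
      funext j
      simp only [Pi.add_apply, Pi.smul_apply, Finset.sum_apply, Pi.sub_apply, toR,
        smul_eq_mul, Nat.cast_mul, Nat.cast_zero]
      have hterm : ∀ i : ↥S₀,
          max (v i) 0 * ((dind S₀ i j : ℝ) - 0)
            + max (-(v i)) 0 * ((N i : ℝ) * (dind S₀ jy j : ℝ) - (dind S₀ i j : ℝ))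
          = v i * (dind S₀ i j : ℝ) + (max (-(v i)) 0 * N i) * (dind S₀ jy j : ℝ) := by
        intro i
        have hmax : max (v i) 0 - max (-(v i)) 0 = v i := max_zero_sub_max_neg_zero_eq_self (v i)
        nlinarith [hmax]
      rw [Finset.sum_congr rfl (fun i _ => hterm i), Finset.sum_add_distrib]
      have h1 : ∑ i : ↥S₀, v i * (dind S₀ i j : ℝ) = v j := by
        rw [Fintype.sum_eq_single j]
        · simp [dind]
        · intro i hi
          have : ¬ (j = i) := fun h => hi h.symm
          simp [dind, this]
      have h2 : ∑ i : ↥S₀, (max (-(v i)) 0 * N i) * (dind S₀ jy j : ℝ)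
          = Kc * (dind S₀ jy j : ℝ) := by
        rw [hKcdef, Finset.sum_mul]
      rw [h1, h2]
      have hre : δy j = (dind S₀ jy j : ℝ) := rfl
      rw [hre]
      ring
    rw [hform]
    apply tkcone_sum
    intro i _
    apply tkcone_add
    · apply tkcone_smul _ (le_max_right _ _)
      apply tkcone_gen
      apply sig_mono hzero hadd
      intro j
      exact Nat.zero_le _
    · apply tkcone_smul _ (le_max_right _ _)
      apply tkcone_gen
      rw [sig_dind, sig_indic, hjy]
      exact hN i
  obtain ⟨g, hg1, hg2⟩ := riesz_extension K (g₀.toPMap M) nonneg dense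
  have hgM : ∀ v (hv : v ∈ M), g v = g₀ v := by
    intro v hv
    have hv' : v ∈ (g₀.toPMap M).domain := by rwa [LinearMap.toPMap_domain]
    have := hg1 ⟨v, hv'⟩
    exact this
  -- the measure
  refine ⟨fun s => if h : s ∈ S₀ then g (toR S₀ (dind S₀ ⟨s, h⟩)) else 0, ?_, ?_, ?_, ?_⟩
  · intro s hs
    dsimp only
    rw [dif_pos hs]
    apply hg2
    show _ ∈ tkcone S₀
    have h0 : toR S₀ (dind S₀ (⟨s, hs⟩ : ↥S₀)) =
        toR S₀ (dind S₀ (⟨s, hs⟩ : ↥S₀)) - toR S₀ (fun _ => 0) := by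
      funext j; simp [toR]
    rw [h0]
    apply tkcone_gen
    apply sig_mono hzero hadd
    intro j
    exact Nat.zero_le _
  · dsimp only
    rw [dif_pos hyS₀]
    have : (⟨y, hyS₀⟩ : ↥S₀) = jy := rfl
    rw [this, ← hδydef, hgM δy hδyM]
    have : δy = (0:ℝ) • δx + (1:ℝ) • δy := by simp
    rw [this, factA 0 1]
    ring
  · intro mm nn xs ys hxs hys hsum
    have hx1 : ∀ i, (if h : xs i ∈ S₀ then g (toR S₀ (dind S₀ ⟨xs i, h⟩)) else 0)
        = g (toR S₀ (dind S₀ ⟨xs i, hxs i⟩)) := fun i => dif_pos (hxs i)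
    have hy1 : ∀ j, (if h : ys j ∈ S₀ then g (toR S₀ (dind S₀ ⟨ys j, h⟩)) else 0)
        = g (toR S₀ (dind S₀ ⟨ys j, hys j⟩)) := fun j => dif_pos (hys j)
    simp only [hx1, hy1]
    set axs : ↥S₀ → ℕ := fun j => ∑ i : Fin mm, dind S₀ ⟨xs i, hxs i⟩ j with haxs
    set bys : ↥S₀ → ℕ := fun j => ∑ i : Fin nn, dind S₀ ⟨ys i, hys i⟩ j with hbys
    have hsig1 : sig S₀ axs = ∑ i, xs i := by
      rw [haxs, sig_sum]
      congr 1
      funext i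
      exact sig_dind S₀ _
    have hsig2 : sig S₀ bys = ∑ j, ys j := by
      rw [hbys, sig_sum]
      congr 1
      funext i
      exact sig_dind S₀ _
    have htoR1 : toR S₀ axs = ∑ i : Fin mm, toR S₀ (dind S₀ ⟨xs i, hxs i⟩) := by
      funext j
      simp [toR, haxs, Finset.sum_apply]
    have htoR2 : toR S₀ bys = ∑ i : Fin nn, toR S₀ (dind S₀ ⟨ys i, hys i⟩) := by
      funext j
      simp [toR, hbys, Finset.sum_apply]
    have hmem : toR S₀ bys - toR S₀ axs ∈ tkcone S₀ := by
      apply tkcone_gen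
      rw [hsig1, hsig2]
      exact hsum
    have := hg2 _ hmem
    rw [map_sub] at this
    have h3 : g (toR S₀ axs) ≤ g (toR S₀ bys) := by linarith
    rw [htoR1, htoR2] at h3
    rw [map_sum, map_sum] at h3
    exact h3
  · dsimp only
    rw [dif_pos hxS₀]
    have : (⟨x, hxS₀⟩ : ↥S₀) = jx := rfl
    rw [this, ← hδxdef, hgM δx hδxM]
    have h4 : δx = (1:ℝ) • δx + (0:ℝ) • δy := by simp
    rw [h4, factA 1 0]
    show 1 * f0 + 0 = sInf (Rset y x)
    simp only [one_mul, add_zero]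
    exact hf0def
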